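/- Let (Ω, μ) be a measure space and n ≥ 1. There exists a constant C > 0 such that for all f, g ∈ L^{4/3}(Ω, μ; ℝⁿ), the fields Φ(f) and Φ(g) belong to L⁴(Ω, μ; ℝⁿ) and ‖Φ(f) − Φ(g)‖_{L⁴} ≤ C ‖f − g‖_{L^{4/3}}^{1/3}. -/

import Mathlib

open MeasureTheory
open scoped ENNReal

/-- The duality map `Φ(x) = ‖x‖^{-2/3} x`, with `Φ(0) = 0`. -/
noncomputable def Phi {n : ℕ} (x : EuclideanSpace ℝ (Fin n)) : EuclideanSpace ℝ (Fin n) :=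
  (‖x‖ ^ (-(2 : ℝ) / 3)) • x

lemma phi_norm' {n : ℕ} (x : EuclideanSpace ℝ (Fin n)) : ‖Phi x‖ = ‖x‖ ^ ((1 : ℝ) / 3) := by
  rcases eq_or_ne x 0 with rfl | hx
  · simp [Phi, Real.zero_rpow (by norm_num : (1:ℝ)/3 ≠ 0)]
  · have h : (0:ℝ) < ‖x‖ := norm_pos_iff.2 hx
    rw [Phi, norm_smul, Real.norm_eq_abs, abs_of_nonneg (Real.rpow_nonneg h.le _)]
    nth_rewrite 2 [← Real.rpow_one ‖x‖]
    rw [← Real.rpow_add h]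
    norm_num

lemma real_rpow_add_le {x y p : ℝ} (hx : 0 ≤ x) (hy : 0 ≤ y) (hp0 : 0 ≤ p) (hp1 : p ≤ 1) :
    (x + y) ^ p ≤ x ^ p + y ^ p := by
  have h := NNReal.rpow_add_le_add_rpow x.toNNReal y.toNNReal hp0 hp1
  have := NNReal.coe_le_coe.2 h
  push_cast [Real.coe_toNNReal x hx, Real.coe_toNNReal y hy] at this
  exact this

lemma rpow_sub_le {a b d p : ℝ} (hb : 0 ≤ b) (hba : b ≤ a) (h : a - b ≤ d)
    (hp0 : 0 ≤ p) (hp1 : p ≤ 1) : a ^ p - b ^ p ≤ d ^ p := by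
  have h1 : a ^ p ≤ (a - b) ^ p + b ^ p := by
    have := real_rpow_add_le (x := a - b) (y := b) (by linarith) hb hp0 hp1
    rwa [sub_add_cancel] at this
  have h2 : (a - b) ^ p ≤ d ^ p := Real.rpow_le_rpow (by linarith) h hp0
  linarith

lemma phi_holder_aux {n : ℕ} (x y : EuclideanSpace ℝ (Fin n)) (hba : ‖y‖ ≤ ‖x‖) :
    ‖Phi x - Phi y‖ ≤ 4 * ‖x - y‖ ^ ((1 : ℝ) / 3) := by
  have hb : (0:ℝ) ≤ ‖y‖ := norm_nonneg _
  have hd : (0:ℝ) ≤ ‖x - y‖ := norm_nonneg _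
  have habd : ‖x‖ - ‖y‖ ≤ ‖x - y‖ := norm_sub_norm_le x y
  have hd3 : (0:ℝ) ≤ ‖x - y‖ ^ ((1:ℝ)/3) := Real.rpow_nonneg hd _
  rcases le_or_gt ‖x‖ (2 * ‖x - y‖) with hcase | hcase
  · have h1 : ‖Phi x - Phi y‖ ≤ ‖x‖ ^ ((1:ℝ)/3) + ‖y‖ ^ ((1:ℝ)/3) := by
      calc ‖Phi x - Phi y‖ ≤ ‖Phi x‖ + ‖Phi y‖ := norm_sub_le _ _
        _ = ‖x‖ ^ ((1:ℝ)/3) + ‖y‖ ^ ((1:ℝ)/3) := by rw [phi_norm', phi_norm']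
    have h2 : ‖x‖ ^ ((1:ℝ)/3) ≤ (2 * ‖x - y‖) ^ ((1:ℝ)/3) :=
      Real.rpow_le_rpow (hb.trans hba) hcase (by norm_num)
    have h3 : ‖y‖ ^ ((1:ℝ)/3) ≤ (2 * ‖x - y‖) ^ ((1:ℝ)/3) :=
      Real.rpow_le_rpow hb (hba.trans hcase) (by norm_num)
    have h4 : (2 * ‖x - y‖) ^ ((1:ℝ)/3) = 2 ^ ((1:ℝ)/3) * ‖x - y‖ ^ ((1:ℝ)/3) :=
      Real.mul_rpow (by norm_num) hd
    have h5 : (2:ℝ) ^ ((1:ℝ)/3) ≤ 2 := by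
      calc (2:ℝ) ^ ((1:ℝ)/3) ≤ 2 ^ (1:ℝ) :=
        Real.rpow_le_rpow_of_exponent_le (by norm_num) (by norm_num)
        _ = 2 := Real.rpow_one 2
    have h6 : 2 ^ ((1:ℝ)/3) * ‖x - y‖ ^ ((1:ℝ)/3) ≤ 2 * ‖x - y‖ ^ ((1:ℝ)/3) :=
      mul_le_mul_of_nonneg_right h5 hd3
    linarith
  · have ha : (0:ℝ) < ‖x‖ := lt_of_le_of_lt (by linarith) hcase
    have hb' : (0:ℝ) < ‖y‖ := by linarith
    have hda : ‖x - y‖ ≤ ‖x‖ := by linarith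
    set a := ‖x‖ with ha_def
    set b := ‖y‖ with hb_def
    set d := ‖x - y‖ with hd_def
    have hdecomp : Phi x - Phi y =
        (a ^ (-(2:ℝ)/3)) • (x - y) + (a ^ (-(2:ℝ)/3) - b ^ (-(2:ℝ)/3)) • y := by
      simp only [Phi, ← ha_def, ← hb_def]
      module
    set A := a ^ ((2:ℝ)/3) with hA_def
    set B := b ^ ((2:ℝ)/3) with hB_def
    have hA : 0 < A := Real.rpow_pos_of_pos ha _
    have hB : 0 < B := Real.rpow_pos_of_pos hb' _
    have hc1 : a ^ (-(2:ℝ)/3) = A⁻¹ := by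
      rw [hA_def, ← Real.rpow_neg ha.le]; norm_num
    have hc2 : b ^ (-(2:ℝ)/3) = B⁻¹ := by
      rw [hB_def, ← Real.rpow_neg hb'.le]; norm_num
    have hc12 : A⁻¹ ≤ B⁻¹ := by
      apply inv_anti₀ hB
      exact Real.rpow_le_rpow hb'.le hba (by norm_num)
    have hkey : ‖Phi x - Phi y‖ ≤ A⁻¹ * d + (B⁻¹ - A⁻¹) * b := by
      rw [hdecomp, hc1, hc2]
      refine (norm_add_le _ _).trans ?_
      rw [norm_smul, norm_smul, Real.norm_eq_abs, Real.norm_eq_abs,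
        abs_of_nonneg (inv_nonneg.2 hA.le), abs_of_nonpos (by linarith), neg_sub]
    -- auxiliary rpow facts
    set a3 := a ^ ((1:ℝ)/3) with ha3_def
    set b3 := b ^ ((1:ℝ)/3) with hb3_def
    set d3 := d ^ ((1:ℝ)/3) with hd3_def
    have ha3 : 0 < a3 := Real.rpow_pos_of_pos ha _
    have hb3 : 0 < b3 := Real.rpow_pos_of_pos hb' _
    have hd3' : 0 ≤ d3 := Real.rpow_nonneg hd _
    have hAa : A = a3 * a3 := by
      rw [hA_def, ha3_def, ← Real.rpow_add ha]; norm_num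
    have hBb : B = b3 * b3 := by
      rw [hB_def, hb3_def, ← Real.rpow_add hb']; norm_num
    have haa : a = a3 * A := by
      rw [hA_def, ha3_def, ← Real.rpow_add ha]
      norm_num
    have hbb : b = b3 * B := by
      rw [hB_def, hb3_def, ← Real.rpow_add hb']
      norm_num
    have hdd : d ≤ d3 * A := by
      rcases eq_or_lt_of_le hd with h0 | h0
      · rw [← h0]; exact mul_nonneg hd3' hA.le
      · have : d = d3 * d ^ ((2:ℝ)/3) := by
          rw [hd3_def, ← Real.rpow_add h0]; norm_num
        rw [this]
        have : d ^ ((2:ℝ)/3) ≤ A := by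
          rw [hA_def]; exact Real.rpow_le_rpow hd hda (by norm_num)
        exact mul_le_mul_of_nonneg_left this hd3'
    have hAB : A - B ≤ d3 * d3 := by
      have h1 : A - B ≤ d ^ ((2:ℝ)/3) := by
        rw [hA_def, hB_def]
        exact rpow_sub_le hb'.le hba habd (by norm_num) (by norm_num)
      have h2 : d ^ ((2:ℝ)/3) = d3 * d3 := by
        rcases eq_or_lt_of_le hd with h0 | h0
        · simp [← h0, hd3_def, Real.zero_rpow, (by norm_num : (2:ℝ)/3 ≠ 0),
            (by norm_num : (1:ℝ)/3 ≠ 0)]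
        · rw [hd3_def, ← Real.rpow_add h0]; norm_num
      linarith
    have hd3a3 : d3 ≤ a3 := by
      rw [hd3_def, ha3_def]; exact Real.rpow_le_rpow hd hda (by norm_num)
    have hb3a3 : b3 ≤ a3 := by
      rw [hb3_def, ha3_def]; exact Real.rpow_le_rpow hb'.le hba (by norm_num)
    -- bound the two terms
    have hterm1 : A⁻¹ * d ≤ d3 := by
      rw [inv_mul_le_iff₀ hA, mul_comm]
      exact hdd
    have hterm2 : (B⁻¹ - A⁻¹) * b ≤ d3 := by
      have hABne : (0:ℝ) < A * B := mul_pos hA hB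
      have expand : (B⁻¹ - A⁻¹) * b = (A - B) * b / (A * B) := by
        rw [eq_div_iff hABne.ne']
        field_simp
      rw [expand, div_le_iff₀ hABne]
      have h1 : (A - B) * b ≤ (d3 * d3) * b :=
        mul_le_mul_of_nonneg_right hAB hb'.le
      have h2 : (d3 * d3) * b = d3 * (d3 * b3) * B := by rw [hbb]; ring
      have h3 : d3 * b3 ≤ a3 * a3 := mul_le_mul hd3a3 hb3a3 hb3.le ha3.le
      have h4 : d3 * (d3 * b3) * B ≤ d3 * (a3 * a3) * B := by
        have := mul_le_mul_of_nonneg_left h3 hd3'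
        exact mul_le_mul_of_nonneg_right this hB.le
      calc (A - B) * b ≤ (d3 * d3) * b := h1
        _ = d3 * (d3 * b3) * B := h2
        _ ≤ d3 * (a3 * a3) * B := h4
        _ = d3 * (A * B) := by rw [hAa]; ring
    calc ‖Phi x - Phi y‖ ≤ A⁻¹ * d + (B⁻¹ - A⁻¹) * b := hkey
      _ ≤ d3 + d3 := add_le_add hterm1 hterm2
      _ ≤ 4 * d3 := by linarith

lemma phi_holder {n : ℕ} (x y : EuclideanSpace ℝ (Fin n)) :
    ‖Phi x - Phi y‖ ≤ 4 * ‖x - y‖ ^ ((1 : ℝ) / 3) := by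
  rcases le_total ‖y‖ ‖x‖ with h | h
  · exact phi_holder_aux x y h
  · rw [norm_sub_rev, norm_sub_rev x y]
    exact phi_holder_aux y x h

lemma phi_holderWith {n : ℕ} : HolderWith 4 (1/3 : NNReal) (Phi (n := n)) := by
  intro x y
  rw [edist_dist, edist_dist, dist_eq_norm, dist_eq_norm]
  have hcoe : (((1/3 : NNReal)) : ℝ) = (1 : ℝ) / 3 := by norm_num
  rw [hcoe]
  calc ENNReal.ofReal ‖Phi x - Phi y‖
      ≤ ENNReal.ofReal (4 * ‖x - y‖ ^ ((1 : ℝ) / 3)) :=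
        ENNReal.ofReal_le_ofReal (phi_holder x y)
    _ = ((4 : NNReal) : ℝ≥0∞) * ENNReal.ofReal ‖x - y‖ ^ ((1 : ℝ) / 3) := by
        rw [ENNReal.ofReal_mul (by norm_num), ← ENNReal.ofReal_rpow_of_nonneg (norm_nonneg _)
          (by norm_num)]
        norm_num

lemma phi_continuous {n : ℕ} : Continuous (Phi (n := n)) :=
  phi_holderWith.continuous (by norm_num)

lemma memPhi {Ω : Type*} [MeasurableSpace Ω] {μ : Measure Ω} {n : ℕ}
    {f : Ω → EuclideanSpace ℝ (Fin n)} (hf : MemLp f (4 / 3) μ) :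
    MemLp (fun x => Phi (f x)) 4 μ := by
  have h := hf.norm_rpow_div 3⁻¹
  have h3 : ((3 : ℝ≥0∞)⁻¹).toReal = (1 / 3 : ℝ) := by
    simp [ENNReal.toReal_inv]
  have hdiv : (4 / 3 : ℝ≥0∞) / 3⁻¹ = 4 := by
    rw [div_eq_mul_inv, inv_inv, div_eq_mul_inv, mul_assoc,
      ENNReal.inv_mul_cancel (by norm_num) (by norm_num), mul_one]
  rw [h3, hdiv] at h
  refine h.of_le (phi_continuous.comp_aestronglyMeasurable hf.1) ?_
  filter_upwards with x
  rw [phi_norm', Real.norm_of_nonneg (Real.rpow_nonneg (norm_nonneg _) _)]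

theorem duality_map_Lp_continuity
    {Ω : Type*} [MeasurableSpace Ω] (μ : Measure Ω) (n : ℕ) (hn : 1 ≤ n) :
    ∃ C : ℝ, 0 < C ∧ ∀ f g : Ω → EuclideanSpace ℝ (Fin n),
      MemLp f (4 / 3) μ → MemLp g (4 / 3) μ →
      MemLp (fun x => Phi (f x)) 4 μ ∧ MemLp (fun x => Phi (g x)) 4 μ ∧
      (eLpNorm (fun x => Phi (f x) - Phi (g x)) 4 μ).toReal ≤
        C * (eLpNorm (f - g) (4 / 3) μ).toReal ^ ((1 : ℝ) / 3) := by
  refine ⟨4, by norm_num, fun f g hf hg => ⟨memPhi hf, memPhi hg, ?_⟩⟩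
  have hsub : MemLp (f - g) (4 / 3) μ := hf.sub hg
  have h1 : eLpNorm (fun x => Phi (f x) - Phi (g x)) 4 μ ≤
      eLpNorm ((4 : ℝ) • fun x => ‖(f - g) x‖ ^ ((1 : ℝ) / 3)) 4 μ := by
    refine eLpNorm_mono fun x => ?_
    have := phi_holder (f x) (g x)
    simp only [Pi.smul_apply, smul_eq_mul]
    rw [Real.norm_of_nonneg (by positivity)]
    exact this
  have h2 : eLpNorm ((4 : ℝ) • fun x => ‖(f - g) x‖ ^ ((1 : ℝ) / 3)) 4 μ =
      (4 : ℝ≥0∞) * eLpNorm (f - g) (4 / 3) μ ^ ((1 : ℝ) / 3) := by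
    rw [eLpNorm_const_smul]
    rw [eLpNorm_norm_rpow (f - g) (by norm_num : (0:ℝ) < 1/3)]
    have h13 : ENNReal.ofReal (1 / 3 : ℝ) = 1 / 3 := by
      rw [ENNReal.ofReal_div_of_pos (by norm_num), ENNReal.ofReal_one, ENNReal.ofReal_ofNat]
    have h43 : (4 : ℝ≥0∞) * ENNReal.ofReal (1 / 3 : ℝ) = 4 / 3 := by
      rw [h13, mul_one_div]
    rw [h43]
    congr 1
    rw [Real.enorm_eq_ofReal (by norm_num)]
    simp
  have hfin : (4 : ℝ≥0∞) * eLpNorm (f - g) (4 / 3) μ ^ ((1 : ℝ) / 3) ≠ ∞ := by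
    refine ENNReal.mul_ne_top (by norm_num) ?_
    exact (ENNReal.rpow_lt_top_of_nonneg (by norm_num) hsub.2.ne).ne
  have := ENNReal.toReal_mono hfin (h1.trans_eq h2)
  rw [ENNReal.toReal_mul, ← ENNReal.toReal_rpow] at this
  simpa using this
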